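/- CbV embedding lemma: for every dCBV term M, if the dBang translation Mᵛ reduces in one dBang step to N, then there exists a dCBV term P such that M reduces in dCBV in finitely many steps to P and N reduces in dBang in finitely many steps to Pᵛ. -/

import Mathlib

namespace DBangPaper

/-- dBang terms (with ⊥ used for Böhm approximants). -/
inductive DTerm : Type
  | var : ℕ → DTerm
  | lam : ℕ → DTerm → DTerm
  | app : DTerm → DTerm → DTerm
  | bang : DTerm → DTerm
  | der : DTerm → DTerm
  | sub : DTerm → ℕ → DTerm → DTerm   -- `sub M x N` is M[N/x]
  | bot : DTerm
  deriving DecidableEq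

/-- meta-level substitution M{N/x} (written `dsubst N x M`). -/
def dsubst (N : DTerm) (x : ℕ) : DTerm → DTerm
  | .var y => if y = x then N else .var y
  | .lam y M => if y = x then .lam y M else .lam y (dsubst N x M)
  | .app M P => .app (dsubst N x M) (dsubst N x P)
  | .bang M => .bang (dsubst N x M)
  | .der M => .der (dsubst N x M)
  | .sub M y P =>
      if y = x then .sub M y (dsubst N x P)
      else .sub (dsubst N x M) y (dsubst N x P)
  | .bot => .bot

/-- list contexts L = □[N₁/x₁]…[Nₖ/xₖ], applied to a term. -/
def lfill (l : List (ℕ × DTerm)) (M : DTerm) : DTerm :=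
  l.foldl (fun A p => .sub A p.1 p.2) M

/-- root (at-a-distance) reduction rules of dBang. -/
inductive Root : DTerm → DTerm → Prop
  | der (l N) : Root (.der (lfill l (.bang N))) (lfill l N)
  | beta (l x M N) : Root (.app (lfill l (.lam x M)) N) (lfill l (.sub M x N))
  | subst (M x l N) : Root (.sub M x (lfill l (.bang N))) (lfill l (dsubst N x M))

/-- full one-step dBang reduction (closure under all contexts). -/
inductive Step : DTerm → DTerm → Prop
  | root {M N} : Root M N → Step M N
  | lam (x) {M N} : Step M N → Step (.lam x M) (.lam x N)
  | appL {M M'} (N) : Step M M' → Step (.app M N) (.app M' N)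
  | appR (M) {N N'} : Step N N' → Step (.app M N) (.app M N')
  | bang {M N} : Step M N → Step (.bang M) (.bang N)
  | der {M N} : Step M N → Step (.der M) (.der N)
  | subL {M M'} (x N) : Step M M' → Step (.sub M x N) (.sub M' x N)
  | subR (M x) {N N'} : Step N N' → Step (.sub M x N) (.sub M x N')

/-- surface one-step dBang reduction (not under a bang). -/
inductive SStep : DTerm → DTerm → Prop
  | root {M N} : Root M N → SStep M N
  | lam (x) {M N} : SStep M N → SStep (.lam x M) (.lam x N)
  | appL {M M'} (N) : SStep M M' → SStep (.app M N) (.app M' N)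
  | appR (M) {N N'} : SStep N N' → SStep (.app M N) (.app M N')
  | der {M N} : SStep M N → SStep (.der M) (.der N)
  | subL {M M'} (x N) : SStep M M' → SStep (.sub M x N) (.sub M' x N)
  | subR (M x) {N N'} : SStep N N' → SStep (.sub M x N) (.sub M x N')

def Steps : DTerm → DTerm → Prop := Relation.ReflTransGen Step
def SSteps : DTerm → DTerm → Prop := Relation.ReflTransGen SStep

/-- resource (δBang) terms: bags of terms replace bangs. -/
inductive RTerm : Type
  | var : ℕ → RTerm
  | lam : ℕ → RTerm → RTerm
  | app : RTerm → RTerm → RTerm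
  | bag : List RTerm → RTerm
  | der : RTerm → RTerm
  | sub : RTerm → ℕ → RTerm → RTerm

mutual
  /-- linear (resource) substitution: `LSub m x ps m'` means m' is one result of
      substituting the resources `ps` linearly for the occurrences of x in m. -/
  inductive LSub : RTerm → ℕ → List RTerm → RTerm → Prop
    | varHit (x p) : LSub (.var x) x [p] p
    | varMiss {y x : ℕ} (h : y ≠ x) : LSub (.var y) x [] (.var y)
    | lam {m x ps m'} (y : ℕ) (hy : y ≠ x) :
        LSub m x ps m' → LSub (.lam y m) x ps (.lam y m')
    | app {m n x ps qs rs m' n'} : LSub m x ps m' → LSub n x qs n' →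
        (ps ++ qs).Perm rs → LSub (.app m n) x rs (.app m' n')
    | der {m x ps m'} : LSub m x ps m' → LSub (.der m) x ps (.der m')
    | sub {m n x ps qs rs m' n'} (y : ℕ) (hy : y ≠ x) : LSub m x ps m' →
        LSub n x qs n' → (ps ++ qs).Perm rs → LSub (.sub m y n) x rs (.sub m' y n')
    | bag {ms x ps ms'} : LSubs ms x ps ms' → LSub (.bag ms) x ps (.bag ms')
  inductive LSubs : List RTerm → ℕ → List RTerm → List RTerm → Prop
    | nil (x) : LSubs [] x [] []
    | cons {m ms x ps qs rs m' ms'} : LSub m x ps m' → LSubs ms x qs ms' →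
        (ps ++ qs).Perm rs → LSubs (m :: ms) x rs (m' :: ms')
end

/-- resource list contexts. -/
def rfill (l : List (ℕ × RTerm)) (m : RTerm) : RTerm :=
  l.foldl (fun a p => .sub a p.1 p.2) m

/-- root resource reduction (producing a single term of the resulting sum). -/
inductive RRoot : RTerm → RTerm → Prop
  | der (l n) : RRoot (.der (rfill l (.bag [n]))) (rfill l n)
  | beta (l x m p) : RRoot (.app (rfill l (.lam x m)) p) (rfill l (.sub m x p))
  | subst {m : RTerm} {x ps m'} (l) : LSub m x ps m' →
      RRoot (.sub m x (rfill l (.bag ps))) (rfill l m')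

/-- root resource reduction to the empty sum ∅ (arity mismatch). -/
inductive RRootE : RTerm → Prop
  | der (l ms) (h : ms.length ≠ 1) : RRootE (.der (rfill l (.bag ms)))
  | subst (m x ps l) (h : ¬ ∃ m', LSub m x ps m') :
      RRootE (.sub m x (rfill l (.bag ps)))

/-- full one-step resource reduction (to a term of the resulting sum). -/
inductive RStep : RTerm → RTerm → Prop
  | root {m n} : RRoot m n → RStep m n
  | lam (x) {m n} : RStep m n → RStep (.lam x m) (.lam x n)
  | appL {m m'} (n) : RStep m m' → RStep (.app m n) (.app m' n)
  | appR (m) {n n'} : RStep n n' → RStep (.app m n) (.app m n')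
  | der {m n} : RStep m n → RStep (.der m) (.der n)
  | subL {m m'} (x n) : RStep m m' → RStep (.sub m x n) (.sub m' x n)
  | subR (m x) {n n'} : RStep n n' → RStep (.sub m x n) (.sub m x n')
  | bag {m m'} (pre post) : RStep m m' →
      RStep (.bag (pre ++ m :: post)) (.bag (pre ++ m' :: post))

/-- full one-step resource reduction to the empty sum. -/
inductive REmpty : RTerm → Prop
  | root {m} : RRootE m → REmpty m
  | lam (x) {m} : REmpty m → REmpty (.lam x m)
  | appL {m} (n) : REmpty m → REmpty (.app m n)
  | appR (m) {n} : REmpty n → REmpty (.app m n)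
  | der {m} : REmpty m → REmpty (.der m)
  | subL {m} (x n) : REmpty m → REmpty (.sub m x n)
  | subR (m x) {n} : REmpty n → REmpty (.sub m x n)
  | bag {m} (pre post) : REmpty m → REmpty (.bag (pre ++ m :: post))

/-- surface one-step resource reduction. -/
inductive RSStep : RTerm → RTerm → Prop
  | root {m n} : RRoot m n → RSStep m n
  | lam (x) {m n} : RSStep m n → RSStep (.lam x m) (.lam x n)
  | appL {m m'} (n) : RSStep m m' → RSStep (.app m n) (.app m' n)
  | appR (m) {n n'} : RSStep n n' → RSStep (.app m n) (.app m n')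
  | der {m n} : RSStep m n → RSStep (.der m) (.der n)
  | subL {m m'} (x n) : RSStep m m' → RSStep (.sub m x n) (.sub m' x n)
  | subR (m x) {n n'} : RSStep n n' → RSStep (.sub m x n) (.sub m x n')

/-- surface one-step resource reduction to the empty sum. -/
inductive RSEmpty : RTerm → Prop
  | root {m} : RRootE m → RSEmpty m
  | lam (x) {m} : RSEmpty m → RSEmpty (.lam x m)
  | appL {m} (n) : RSEmpty m → RSEmpty (.app m n)
  | appR (m) {n} : RSEmpty n → RSEmpty (.app m n)
  | der {m} : RSEmpty m → RSEmpty (.der m)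
  | subL {m} (x n) : RSEmpty m → RSEmpty (.sub m x n)
  | subR (m x) {n} : RSEmpty n → RSEmpty (.sub m x n)

def RSteps : RTerm → RTerm → Prop := Relation.ReflTransGen RStep

/-- the approximation relation m ⊲ M between resource terms and dBang terms. -/
inductive Approx : RTerm → DTerm → Prop
  | var (x) : Approx (.var x) (.var x)
  | lam {m M} (x) : Approx m M → Approx (.lam x m) (.lam x M)
  | app {m M n N} : Approx m M → Approx n N → Approx (.app m n) (.app M N)
  | bang {ms M} : (∀ m ∈ ms, Approx m M) → Approx (.bag ms) (.bang M)
  | der {m M} : Approx m M → Approx (.der m) (.der M)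
  | sub {m M n N} (x) : Approx m M → Approx n N → Approx (.sub m x n) (.sub M x N)

/-- Taylor expansion of a dBang term. -/
def Taylor (M : DTerm) : Set RTerm := {m | Approx m M}

/-- a resource term is normal when it has no redex (no reduction, not even to ∅). -/
def RNormal (m : RTerm) : Prop := (¬ ∃ n, RStep m n) ∧ ¬ REmpty m

/-- normal-form Taylor expansion. -/
def NFTaylor (M : DTerm) : Set RTerm :=
  {n | RNormal n ∧ ∃ m, Approx m M ∧ RSteps m n}

/-- M is of the shape L⟨!N⟩. -/
def IsBangCtx (M : DTerm) : Prop := ∃ l N, M = lfill l (.bang N)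

/-- M is of the shape L⟨λx.N⟩. -/
def IsLamCtx (M : DTerm) : Prop := ∃ l x N, M = lfill l (.lam x N)

/-- dBang Böhm approximants. -/
inductive IsApprox : DTerm → Prop
  | bot : IsApprox .bot
  | var (x) : IsApprox (.var x)
  | lam (x) {A} : IsApprox A → IsApprox (.lam x A)
  | bang {A} : IsApprox A → IsApprox (.bang A)
  | der {A} : IsApprox A → ¬ IsBangCtx A → IsApprox (.der A)
  | app {A B} : IsApprox A → IsApprox B → ¬ IsLamCtx A → IsApprox (.app A B)
  | sub {A B} (x) : IsApprox A → IsApprox B → ¬ IsBangCtx B → IsApprox (.sub A x B)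

/-- the approximation order: A ⊑ M when A is obtained from M by replacing
    subterms by ⊥. -/
inductive SqSub : DTerm → DTerm → Prop
  | bot (M) : SqSub .bot M
  | var (x) : SqSub (.var x) (.var x)
  | lam (x) {A M} : SqSub A M → SqSub (.lam x A) (.lam x M)
  | app {A M B N} : SqSub A M → SqSub B N → SqSub (.app A B) (.app M N)
  | bang {A M} : SqSub A M → SqSub (.bang A) (.bang M)
  | der {A M} : SqSub A M → SqSub (.der A) (.der M)
  | sub {A M B N} (x) : SqSub A M → SqSub B N → SqSub (.sub A x B) (.sub M x N)

/-- the set of Böhm approximants of M. -/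
def BohmSet (M : DTerm) : Set DTerm :=
  {A | IsApprox A ∧ ∃ N, Steps M N ∧ SqSub A N}

/-- Taylor expansion of the Böhm tree of M. -/
def TaylorBT (M : DTerm) : Set RTerm :=
  {m | ∃ A ∈ BohmSet M, Approx m A}

/-- testing contexts T ::= □ | T N | (λx.T) N. -/
inductive TCtx : Type
  | hole : TCtx
  | app : TCtx → DTerm → TCtx
  | lapp : ℕ → TCtx → DTerm → TCtx

def tfill : TCtx → DTerm → DTerm
  | .hole, M => M
  | .app T N, M => .app (tfill T M) N
  | .lapp x T N, M => .app (.lam x (tfill T M)) N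

/-- meaningfulness in dBang. -/
def Meaningful (M : DTerm) : Prop := ∃ T P, SSteps (tfill T M) (.bang P)

/-- the call-by-name fragment dBang_N. -/
inductive InN : DTerm → Prop
  | var (x) : InN (.var x)
  | lam (x) {M} : InN M → InN (.lam x M)
  | app {M N} : InN M → InN N → InN (.app M (.bang N))
  | sub {M N} (x) : InN M → InN N → InN (.sub M x (.bang N))

/-! ### dCBN / dCBV -/

/-- terms of dCBN and dCBV (with ⊥ for approximants). -/
inductive NTerm : Type
  | var : ℕ → NTerm
  | lam : ℕ → NTerm → NTerm
  | app : NTerm → NTerm → NTerm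
  | sub : NTerm → ℕ → NTerm → NTerm
  | bot : NTerm
  deriving DecidableEq

def nsubst (N : NTerm) (x : ℕ) : NTerm → NTerm
  | .var y => if y = x then N else .var y
  | .lam y M => if y = x then .lam y M else .lam y (nsubst N x M)
  | .app M P => .app (nsubst N x M) (nsubst N x P)
  | .sub M y P =>
      if y = x then .sub M y (nsubst N x P)
      else .sub (nsubst N x M) y (nsubst N x P)
  | .bot => .bot

def nlfill (l : List (ℕ × NTerm)) (M : NTerm) : NTerm :=
  l.foldl (fun A p => .sub A p.1 p.2) M

def IsValueN : NTerm → Prop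
  | .var _ => True
  | .lam _ _ => True
  | _ => False

/-- dCBN reduction. -/
inductive RootN : NTerm → NTerm → Prop
  | beta (l x M N) : RootN (.app (nlfill l (.lam x M)) N) (nlfill l (.sub M x N))
  | subst (M x N) : RootN (.sub M x N) (nsubst N x M)

inductive StepN : NTerm → NTerm → Prop
  | root {M N} : RootN M N → StepN M N
  | lam (x) {M N} : StepN M N → StepN (.lam x M) (.lam x N)
  | appL {M M'} (N) : StepN M M' → StepN (.app M N) (.app M' N)
  | appR (M) {N N'} : StepN N N' → StepN (.app M N) (.app M N')
  | subL {M M'} (x N) : StepN M M' → StepN (.sub M x N) (.sub M' x N)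
  | subR (M x) {N N'} : StepN N N' → StepN (.sub M x N) (.sub M x N')

/-- dCBV reduction. -/
inductive RootV : NTerm → NTerm → Prop
  | beta (l x M N) : RootV (.app (nlfill l (.lam x M)) N) (nlfill l (.sub M x N))
  | subst (M x l) {V} (hV : IsValueN V) :
      RootV (.sub M x (nlfill l V)) (nlfill l (nsubst V x M))

inductive StepV : NTerm → NTerm → Prop
  | root {M N} : RootV M N → StepV M N
  | lam (x) {M N} : StepV M N → StepV (.lam x M) (.lam x N)
  | appL {M M'} (N) : StepV M M' → StepV (.app M N) (.app M' N)
  | appR (M) {N N'} : StepV N N' → StepV (.app M N) (.app M N')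
  | subL {M M'} (x N) : StepV M M' → StepV (.sub M x N) (.sub M' x N)
  | subR (M x) {N N'} : StepV N N' → StepV (.sub M x N) (.sub M x N')

def StepsN : NTerm → NTerm → Prop := Relation.ReflTransGen StepN
def StepsV : NTerm → NTerm → Prop := Relation.ReflTransGen StepV

/-- the call-by-name translation into dBang. -/
def tradN : NTerm → DTerm
  | .var x => .var x
  | .lam x M => .lam x (tradN M)
  | .app M N => .app (tradN M) (.bang (tradN N))
  | .sub M x N => .sub (tradN M) x (.bang (tradN N))
  | .bot => .bot

/-- decompose M = L⟨!P⟩, returning L⟨P⟩. -/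
def debang : DTerm → Option DTerm
  | .bang P => some P
  | .sub M x N => (debang M).map fun M' => .sub M' x N
  | _ => none

/-- the call-by-value translation into dBang. -/
def tradV : NTerm → DTerm
  | .var x => .bang (.var x)
  | .lam x M => .bang (.lam x (tradV M))
  | .app M N =>
      match debang (tradV M) with
      | some Q => .app Q (tradV N)
      | none => .app (.der (tradV M)) (tradV N)
  | .sub M x N => .sub (tradV M) x (tradV N)
  | .bot => .bot

/-- the CbN approximation relation ⊲ₙ. -/
inductive ApproxN : RTerm → NTerm → Prop
  | var (x) : ApproxN (.var x) (.var x)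
  | lam {m M} (x) : ApproxN m M → ApproxN (.lam x m) (.lam x M)
  | app {m M ns N} : ApproxN m M → (∀ n ∈ ns, ApproxN n N) →
      ApproxN (.app m (.bag ns)) (.app M N)
  | sub {m M ns N} (x) : ApproxN m M → (∀ n ∈ ns, ApproxN n N) →
      ApproxN (.sub m x (.bag ns)) (.sub M x N)

def TaylorN (M : NTerm) : Set RTerm := {m | ApproxN m M}

/-- the CbV approximation relation ⊲ᵥ. -/
inductive ApproxV : RTerm → NTerm → Prop
  | var (x k) : ApproxV (.bag (List.replicate k (.var x))) (.var x)
  | lam {ms : List RTerm} {M} (x) : (∀ m ∈ ms, ApproxV m M) →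
      ApproxV (.bag (ms.map (RTerm.lam x))) (.lam x M)
  | appN {m M n N} : ¬ IsValueN M → ApproxV m M → ApproxV n N →
      ApproxV (.app (.der m) n) (.app M N)
  | appV {m V n N} : IsValueN V → ApproxV (.bag [m]) V → ApproxV n N →
      ApproxV (.app m n) (.app V N)
  | sub {m M n N} (x) : ApproxV m M → ApproxV n N →
      ApproxV (.sub m x n) (.sub M x N)

def TaylorV (M : NTerm) : Set RTerm := {m | ApproxV m M}

def NFTaylorN (M : NTerm) : Set RTerm :=
  {n | RNormal n ∧ ∃ m, ApproxN m M ∧ RSteps m n}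

def NFTaylorV (M : NTerm) : Set RTerm :=
  {n | RNormal n ∧ ∃ m, ApproxV m M ∧ RSteps m n}

/-- order A ⊑ M on dCBN/dCBV terms. -/
inductive SqSubN : NTerm → NTerm → Prop
  | bot (M) : SqSubN .bot M
  | var (x) : SqSubN (.var x) (.var x)
  | lam (x) {A M} : SqSubN A M → SqSubN (.lam x A) (.lam x M)
  | app {A M B N} : SqSubN A M → SqSubN B N → SqSubN (.app A B) (.app M N)
  | sub {A M B N} (x) : SqSubN A M → SqSubN B N → SqSubN (.sub A x B) (.sub M x N)

mutual
  /-- CbN Böhm approximants Aₙ. -/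
  inductive IsAN : NTerm → Prop
    | bot : IsAN .bot
    | ofNlam {A} : IsNlam A → IsAN A
    | lam (x) {A} : IsAN A → IsAN (.lam x A)
  /-- head shapes N_λ. -/
  inductive IsNlam : NTerm → Prop
    | var (x) : IsNlam (.var x)
    | app {A B} : IsNlam A → IsAN B → IsNlam (.app A B)
end

def BTnSet (M : NTerm) : Set NTerm :=
  {A | IsAN A ∧ ∃ N, StepsN M N ∧ SqSubN A N}

mutual
  /-- CbV Böhm approximants Aᵥ. -/
  inductive IsAV : NTerm → Prop
    | bot : IsAV .bot
    | ofAlam {A} : IsAlam A → IsAV A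
    | lam (x) {A} : IsAV A → IsAV (.lam x A)
    | sub (x) {A B} : IsAV A → IsAxlam B → IsAV (.sub A x B)
  inductive IsAlam : NTerm → Prop
    | var (x) : IsAlam (.var x)
    | app {A B} : IsAlam A → IsAV B → IsAlam (.app A B)
    | sub (x) {A B} : IsAlam A → IsAxlam B → IsAlam (.sub A x B)
  inductive IsAxlam : NTerm → Prop
    | app {A B} : IsAlam A → IsAV B → IsAxlam (.app A B)
    | sub (x) {A B} : IsAxlam A → IsAxlam B → IsAxlam (.sub A x B)
end

def BTvSet (M : NTerm) : Set NTerm :=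
  {A | IsAV A ∧ ∃ N, StepsV M N ∧ SqSubN A N}

def TaylorBTn (M : NTerm) : Set RTerm := {m | ∃ A ∈ BTnSet M, ApproxN m A}
def TaylorBTv (M : NTerm) : Set RTerm := {m | ∃ A ∈ BTvSet M, ApproxV m A}


/-! ### auxiliary lemmas for the CbV embedding -/

lemma lfill_nil (M : DTerm) : lfill [] M = M := rfl

lemma lfill_cons (x : ℕ) (N : DTerm) (l : List (ℕ × DTerm)) (M : DTerm) :
    lfill ((x, N) :: l) M = lfill l (.sub M x N) := rfl

lemma lfill_append (l₁ l₂ : List (ℕ × DTerm)) (M : DTerm) :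
    lfill (l₁ ++ l₂) M = lfill l₂ (lfill l₁ M) :=
  List.foldl_append

lemma lfill_concat (l : List (ℕ × DTerm)) (x : ℕ) (N M : DTerm) :
    lfill (l ++ [(x, N)]) M = .sub (lfill l M) x N := by
  rw [lfill_append]; rfl

lemma nlfill_nil (M : NTerm) : nlfill [] M = M := rfl

lemma nlfill_cons (x : ℕ) (N : NTerm) (l : List (ℕ × NTerm)) (M : NTerm) :
    nlfill ((x, N) :: l) M = nlfill l (.sub M x N) := rfl

lemma nlfill_append (l₁ l₂ : List (ℕ × NTerm)) (M : NTerm) :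
    nlfill (l₁ ++ l₂) M = nlfill l₂ (nlfill l₁ M) :=
  List.foldl_append

lemma nlfill_concat (l : List (ℕ × NTerm)) (x : ℕ) (N M : NTerm) :
    nlfill (l ++ [(x, N)]) M = .sub (nlfill l M) x N := by
  rw [nlfill_append]; rfl

/-! ### inversion lemmas for root reduction -/

lemma root_der_inv {A N : DTerm} (h : Root (.der A) N) :
    ∃ l C, A = lfill l (.bang C) ∧ N = lfill l C := by
  cases h with
  | der l C => exact ⟨l, C, rfl, rfl⟩

lemma root_app_inv {A B N : DTerm} (h : Root (.app A B) N) :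
    ∃ l x M, A = lfill l (.lam x M) ∧ N = lfill l (.sub M x B) := by
  cases h with
  | beta l x M N => exact ⟨l, x, M, rfl, rfl⟩

lemma root_sub_inv {A B N : DTerm} {x : ℕ} (h : Root (.sub A x B) N) :
    ∃ l C, B = lfill l (.bang C) ∧ N = lfill l (dsubst C x A) := by
  cases h with
  | subst M x l C => exact ⟨l, C, rfl, rfl⟩

/-! ### debang -/

lemma debang_lfill (l : List (ℕ × DTerm)) (M : DTerm) :
    debang (lfill l M) = (debang M).map (lfill l) := by
  induction l generalizing M with
  | nil => cases hM : debang M <;> simp [hM, lfill_nil]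
  | cons p l ih =>
    obtain ⟨x, N⟩ := p
    rw [lfill_cons, ih]
    cases h : debang M <;> simp [debang, h, lfill_cons]

lemma debang_lfill_bang (l : List (ℕ × DTerm)) (C : DTerm) :
    debang (lfill l (.bang C)) = some (lfill l C) := by
  rw [debang_lfill]; rfl

lemma debang_eq_some {A E : DTerm} (h : debang A = some E) :
    ∃ l C, A = lfill l (.bang C) ∧ E = lfill l C := by
  induction A generalizing E with
  | bang C => exact ⟨[], C, rfl, by cases h; rfl⟩
  | sub M x N ihM _ =>
    simp only [debang, Option.map_eq_some_iff] at h
    obtain ⟨E', hE', rfl⟩ := h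
    obtain ⟨l, C, rfl, rfl⟩ := ihM hE'
    exact ⟨l ++ [(x, N)], C, by rw [lfill_concat], by rw [lfill_concat]⟩
  | _ => simp [debang] at h

lemma dsubst_lfill_bang (B : DTerm) (x : ℕ) (l : List (ℕ × DTerm)) (C : DTerm) :
    ∃ l' C', dsubst B x (lfill l (.bang C)) = lfill l' (.bang C') ∧
      dsubst B x (lfill l C) = lfill l' C' := by
  induction l using List.reverseRecOn with
  | nil => exact ⟨[], dsubst B x C, rfl, rfl⟩
  | append_singleton l p ih =>
    obtain ⟨y, N⟩ := p
    obtain ⟨l', C', h1, h2⟩ := ih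
    by_cases hy : y = x
    · refine ⟨l ++ [(y, dsubst B x N)], C, ?_, ?_⟩ <;>
        simp [lfill_concat, dsubst, hy]
    · refine ⟨l' ++ [(y, dsubst B x N)], C', ?_, ?_⟩ <;>
        simp [lfill_concat, dsubst, hy, h1, h2]

lemma lfill_inj : ∀ (l₁ : List (ℕ × DTerm)) {M₁ M₂ : DTerm} (l₂ : List (ℕ × DTerm)),
    (∀ A x B, M₁ ≠ .sub A x B) → (∀ A x B, M₂ ≠ .sub A x B) →
    lfill l₁ M₁ = lfill l₂ M₂ → l₁ = l₂ ∧ M₁ = M₂ := by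
  intro l₁
  induction l₁ using List.reverseRecOn with
  | nil =>
    intro M₁ M₂ l₂ h₁ h₂ h
    rcases l₂.eq_nil_or_concat with rfl | ⟨L, ⟨y, B⟩, rfl⟩
    · exact ⟨rfl, h⟩
    · simp only [List.concat_eq_append, lfill_concat] at h ⊢
      exact absurd h (h₁ _ _ _)
  | append_singleton l p ih =>
    obtain ⟨x, N⟩ := p
    intro M₁ M₂ l₂ h₁ h₂ h
    rcases l₂.eq_nil_or_concat with rfl | ⟨L, ⟨y, B⟩, rfl⟩
    · rw [lfill_concat] at h
      exact absurd h.symm (h₂ _ _ _)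
    · simp only [List.concat_eq_append, lfill_concat] at h ⊢
      injection h with h hx hN
      obtain ⟨rfl, hM⟩ := ih L h₁ h₂ h
      subst hx; subst hN
      exact ⟨rfl, hM⟩

lemma debang_dsubst_none {B : DTerm} (x : ℕ) (hB : debang B = none) :
    ∀ {A : DTerm}, debang A = none → debang (dsubst B x A) = none := by
  intro A
  induction A with
  | var y => intro _; by_cases hy : y = x <;> simp [dsubst, hy, hB, debang]
  | lam y M _ => intro _; by_cases hy : y = x <;> simp [dsubst, hy, debang]
  | sub M y N ihM _ =>
    intro h
    simp only [debang, Option.map_eq_none_iff] at h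
    by_cases hy : y = x <;> simp [dsubst, hy, debang, h, ihM h]
  | bang M _ => intro h; simp [debang] at h
  | app M N _ _ => intro _; simp [dsubst, debang]
  | der M _ => intro _; simp [dsubst, debang]
  | bot => intro _; simp [dsubst, debang]

lemma debang_dsubst_some {A E : DTerm} (B : DTerm) (x : ℕ) (h : debang A = some E) :
    debang (dsubst B x A) = some (dsubst B x E) := by
  obtain ⟨l, C, rfl, rfl⟩ := debang_eq_some h
  obtain ⟨l', C', h1, h2⟩ := dsubst_lfill_bang B x l C
  rw [h1, h2, debang_lfill_bang]

/-! ### Steps congruences -/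

lemma steps_bang {A B : DTerm} (h : Steps A B) : Steps (.bang A) (.bang B) :=
  Relation.ReflTransGen.lift (fun m => DTerm.bang m) (fun _ _ => Step.bang) _ _ h

lemma steps_lam (x : ℕ) {A B : DTerm} (h : Steps A B) : Steps (.lam x A) (.lam x B) :=
  Relation.ReflTransGen.lift (fun m => DTerm.lam x m) (fun _ _ => Step.lam x) _ _ h

lemma steps_der {A B : DTerm} (h : Steps A B) : Steps (.der A) (.der B) :=
  Relation.ReflTransGen.lift (fun m => DTerm.der m) (fun _ _ => Step.der) _ _ h

lemma steps_appL (N : DTerm) {A B : DTerm} (h : Steps A B) :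
    Steps (.app A N) (.app B N) :=
  Relation.ReflTransGen.lift (fun m => DTerm.app m N) (fun _ _ s => Step.appL N s) _ _ h

lemma steps_appR (M : DTerm) {A B : DTerm} (h : Steps A B) :
    Steps (.app M A) (.app M B) :=
  Relation.ReflTransGen.lift (fun m => DTerm.app M m) (fun _ _ s => Step.appR M s) _ _ h

lemma steps_subL (x : ℕ) (N : DTerm) {A B : DTerm} (h : Steps A B) :
    Steps (.sub A x N) (.sub B x N) :=
  Relation.ReflTransGen.lift (fun m => DTerm.sub m x N) (fun _ _ s => Step.subL x N s) _ _ h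

lemma steps_subR (M : DTerm) (x : ℕ) {A B : DTerm} (h : Steps A B) :
    Steps (.sub M x A) (.sub M x B) :=
  Relation.ReflTransGen.lift (fun m => DTerm.sub M x m) (fun _ _ s => Step.subR M x s) _ _ h

lemma stepsV_lam (x : ℕ) {A B : NTerm} (h : StepsV A B) : StepsV (.lam x A) (.lam x B) :=
  Relation.ReflTransGen.lift (fun m => NTerm.lam x m) (fun _ _ => StepV.lam x) _ _ h

lemma stepsV_appL (N : NTerm) {A B : NTerm} (h : StepsV A B) :
    StepsV (.app A N) (.app B N) :=
  Relation.ReflTransGen.lift (fun m => NTerm.app m N) (fun _ _ s => StepV.appL N s) _ _ h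

lemma stepsV_appR (M : NTerm) {A B : NTerm} (h : StepsV A B) :
    StepsV (.app M A) (.app M B) :=
  Relation.ReflTransGen.lift (fun m => NTerm.app M m) (fun _ _ s => StepV.appR M s) _ _ h

lemma stepsV_subL (x : ℕ) (N : NTerm) {A B : NTerm} (h : StepsV A B) :
    StepsV (.sub A x N) (.sub B x N) :=
  Relation.ReflTransGen.lift (fun m => NTerm.sub m x N) (fun _ _ s => StepV.subL x N s) _ _ h

lemma stepsV_subR (M : NTerm) (x : ℕ) {A B : NTerm} (h : StepsV A B) :
    StepsV (.sub M x A) (.sub M x B) :=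
  Relation.ReflTransGen.lift (fun m => NTerm.sub M x m) (fun _ _ s => StepV.subR M x s) _ _ h

/-! ### lifting and projecting steps through a bang in a list context -/

lemma lift_step (l : List (ℕ × DTerm)) :
    ∀ C D, Step (lfill l C) D → ∃ B, Step (lfill l (.bang C)) B ∧ debang B = some D := by
  induction l using List.reverseRecOn with
  | nil =>
    intro C D h
    exact ⟨.bang D, Step.bang h, rfl⟩
  | append_singleton l p ih =>
    obtain ⟨x, Nt⟩ := p
    intro C D h
    rw [lfill_concat] at h
    rw [lfill_concat]
    cases h with
    | root hr =>
      obtain ⟨l2, B0, rfl, rfl⟩ := root_sub_inv hr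
      obtain ⟨l3, C3, h1, h2⟩ := dsubst_lfill_bang B0 x l C
      refine ⟨lfill l2 (dsubst B0 x (lfill l (.bang C))), ?_, ?_⟩
      · exact Step.root (Root.subst _ _ _ _)
      · rw [h1, h2, ← lfill_append, ← lfill_append, debang_lfill_bang]
    | subL x N h1 =>
      obtain ⟨B1, hs, hd⟩ := ih C _ h1
      exact ⟨.sub B1 x Nt, Step.subL x Nt hs, by simp [debang, hd]⟩
    | subR M x h2 =>
      exact ⟨.sub (lfill l (.bang C)) x _, Step.subR _ x h2,
        by simp [debang, debang_lfill_bang]⟩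

lemma proj_step (l : List (ℕ × DTerm)) :
    ∀ C B, Step (lfill l (.bang C)) B → ∃ D, Step (lfill l C) D ∧ debang B = some D := by
  induction l using List.reverseRecOn with
  | nil =>
    intro C B h
    cases h with
    | root hr => cases hr
    | bang h1 => exact ⟨_, h1, rfl⟩
  | append_singleton l p ih =>
    obtain ⟨x, Nt⟩ := p
    intro C B h
    rw [lfill_concat] at h
    rw [lfill_concat]
    cases h with
    | root hr =>
      obtain ⟨l2, B0, rfl, rfl⟩ := root_sub_inv hr
      obtain ⟨l3, C3, h1, h2⟩ := dsubst_lfill_bang B0 x l C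
      refine ⟨lfill l2 (dsubst B0 x (lfill l C)), ?_, ?_⟩
      · exact Step.root (Root.subst _ _ _ _)
      · rw [h1, h2, ← lfill_append, ← lfill_append, debang_lfill_bang]
    | subL x N h1 =>
      obtain ⟨D1, hs, hd⟩ := ih C _ h1
      exact ⟨.sub D1 x Nt, Step.subL x Nt hs, by simp [debang, hd]⟩
    | subR M x h2 =>
      exact ⟨.sub (lfill l C) x _, Step.subR _ x h2,
        by simp [debang, debang_lfill_bang]⟩

lemma proj_steps {A B E : DTerm} (h : Steps A B) (hA : debang A = some E) :
    ∃ F, Steps E F ∧ debang B = some F := by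
  induction h with
  | refl => exact ⟨E, Relation.ReflTransGen.refl, hA⟩
  | tail _ hstep ih =>
    obtain ⟨F, hs, hd⟩ := ih
    obtain ⟨l, C, rfl, rfl⟩ := debang_eq_some hd
    obtain ⟨F', hs', hd'⟩ := proj_step l C _ hstep
    exact ⟨F', hs.tail hs', hd'⟩

/-! ### properties of the CbV translation -/

def maplV (l : List (ℕ × NTerm)) : List (ℕ × DTerm) := l.map fun p => (p.1, tradV p.2)

lemma tradV_app_some {M1 : NTerm} {E : DTerm} (M2 : NTerm)
    (hd : debang (tradV M1) = some E) :
    tradV (.app M1 M2) = .app E (tradV M2) := by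
  simp [tradV, hd]

lemma tradV_app_none {M1 : NTerm} (M2 : NTerm) (hd : debang (tradV M1) = none) :
    tradV (.app M1 M2) = .app (.der (tradV M1)) (tradV M2) := by
  simp [tradV, hd]

lemma tradV_nlfill (l : List (ℕ × NTerm)) (M : NTerm) :
    tradV (nlfill l M) = lfill (maplV l) (tradV M) := by
  induction l generalizing M with
  | nil => rfl
  | cons p l ih =>
    obtain ⟨x, N⟩ := p
    rw [nlfill_cons, ih]
    rfl

lemma tradV_value {V : NTerm} (hV : IsValueN V) :
    ∃ Q, tradV V = .bang Q ∧ debang Q = none := by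
  cases V with
  | var x => exact ⟨.var x, rfl, rfl⟩
  | lam x M => exact ⟨.lam x (tradV M), rfl, rfl⟩
  | _ => simp [IsValueN] at hV

lemma tradV_subst {V : NTerm} {Q : DTerm} (x : ℕ) (hQ : tradV V = .bang Q)
    (hQn : debang Q = none) :
    ∀ M, tradV (nsubst V x M) = dsubst Q x (tradV M) := by
  intro M
  induction M with
  | var z =>
    by_cases hz : z = x <;> simp [nsubst, tradV, dsubst, hz, hQ]
  | lam y M ih =>
    by_cases hy : y = x <;> simp [nsubst, tradV, dsubst, hy, ih]
  | app M1 M2 ih1 ih2 =>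
    simp only [nsubst]
    cases hd : debang (tradV M1) with
    | some E =>
      rw [tradV_app_some M2 hd, tradV_app_some (nsubst V x M2)
        (by rw [ih1]; exact debang_dsubst_some Q x hd), ih2]
      rfl
    | none =>
      rw [tradV_app_none M2 hd, tradV_app_none (nsubst V x M2)
        (by rw [ih1]; exact debang_dsubst_none x hQn hd), ih1, ih2]
      rfl
  | sub M1 y M2 ih1 ih2 =>
    by_cases hy : y = x <;> simp [nsubst, tradV, dsubst, hy, ih1, ih2]
  | bot => rfl

lemma tradV_bang_ctx : ∀ (M : NTerm) (l : List (ℕ × DTerm)) (C : DTerm),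
    tradV M = lfill l (.bang C) →
    ∃ l' V, IsValueN V ∧ M = nlfill l' V ∧ l = maplV l' ∧ tradV V = .bang C := by
  intro M
  induction M with
  | var x =>
    intro l C h
    rcases l.eq_nil_or_concat with rfl | ⟨L, ⟨y, B⟩, rfl⟩
    · exact ⟨[], .var x, trivial, rfl, rfl, h⟩
    · simp only [List.concat_eq_append, lfill_concat] at h
      simp [tradV] at h
  | lam x M _ =>
    intro l C h
    rcases l.eq_nil_or_concat with rfl | ⟨L, ⟨y, B⟩, rfl⟩
    · exact ⟨[], .lam x M, trivial, rfl, rfl, h⟩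
    · simp only [List.concat_eq_append, lfill_concat] at h
      simp [tradV] at h
  | app M1 M2 _ _ =>
    intro l C h
    have happ : ∃ A B, tradV (.app M1 M2) = .app A B := by
      cases hd : debang (tradV M1) with
      | some E => exact ⟨_, _, tradV_app_some M2 hd⟩
      | none => exact ⟨_, _, tradV_app_none M2 hd⟩
    obtain ⟨A, B, hAB⟩ := happ
    rw [hAB] at h
    rcases l.eq_nil_or_concat with rfl | ⟨L, ⟨y, B'⟩, rfl⟩
    · rw [lfill_nil] at h; cases h
    · simp only [List.concat_eq_append, lfill_concat] at h
      cases h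
  | sub M1 x M2 ih1 _ =>
    intro l C h
    rcases l.eq_nil_or_concat with rfl | ⟨L, ⟨y, B⟩, rfl⟩
    · rw [lfill_nil] at h
      simp only [tradV] at h
      cases h
    · simp only [List.concat_eq_append, lfill_concat] at h
      simp only [tradV] at h
      injection h with h1 h2 h3
      obtain ⟨l', V, hV, rfl, rfl, hvc⟩ := ih1 L C h1
      refine ⟨l' ++ [(y, M2)], V, hV, ?_, ?_, hvc⟩
      · rw [nlfill_concat, h2]
      · simp [maplV, ← h3]
  | bot =>
    intro l C h
    rcases l.eq_nil_or_concat with rfl | ⟨L, ⟨y, B⟩, rfl⟩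
    · rw [lfill_nil] at h; simp [tradV] at h
    · simp only [List.concat_eq_append, lfill_concat] at h
      simp [tradV] at h

theorem cbv_embedding (M : NTerm) (N : DTerm) (h : Step (tradV M) N) :
    ∃ P, StepsV M P ∧ Steps N (tradV P) := by
  induction M generalizing N with
  | var x =>
    simp only [tradV] at h
    cases h with
    | root hr => cases hr
    | bang h1 =>
      cases h1 with
      | root hr => cases hr
  | lam x M1 ih =>
    simp only [tradV] at h
    cases h with
    | root hr => cases hr
    | bang h1 =>
      cases h1 with
      | root hr => cases hr
      | lam x h2 =>
        obtain ⟨P1, hP1, hP2⟩ := ih _ h2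
        exact ⟨.lam x P1, stepsV_lam x hP1, steps_bang (steps_lam x hP2)⟩
  | app M1 M2 ih1 ih2 =>
    cases hd : debang (tradV M1) with
    | some E =>
      rw [tradV_app_some M2 hd] at h
      obtain ⟨l0, C0, hE1, hE2⟩ := debang_eq_some hd
      obtain ⟨l', V, hV, hM1, hl0, hVC⟩ := tradV_bang_ctx M1 l0 C0 hE1
      cases h with
      | root hr =>
        obtain ⟨l, x, B, rfl, rfl⟩ := root_app_inv hr
        cases V with
        | var y =>
          rw [show tradV (NTerm.var y) = .bang (.var y) from rfl] at hVC
          injection hVC with hVC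
          rw [← hVC] at hE2
          obtain ⟨_, hcontra⟩ := lfill_inj l l0
            (by intro A z B h'; cases h') (by intro A z B h'; cases h') hE2
          cases hcontra
        | lam z B0 =>
          rw [show tradV (NTerm.lam z B0) = .bang (.lam z (tradV B0)) from rfl] at hVC
          injection hVC with hVC
          rw [← hVC] at hE2
          obtain ⟨rfl, hlam⟩ := lfill_inj l l0
            (by intro A w B h'; cases h') (by intro A w B h'; cases h') hE2
          injection hlam with hx hB
          subst hx; subst hB; subst hl0; subst hM1
          refine ⟨nlfill l' (.sub B0 x M2), ?_, ?_⟩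
          · exact Relation.ReflTransGen.single
              (StepV.root (RootV.beta l' x B0 M2))
          · rw [tradV_nlfill]
            exact Relation.ReflTransGen.refl
        | app _ _ => simp [IsValueN] at hV
        | sub _ _ _ => simp [IsValueN] at hV
        | bot => simp [IsValueN] at hV
      | appL N2 h1 =>
        rw [hE2] at h1
        obtain ⟨A', hA1, hA2⟩ := lift_step l0 C0 _ h1
        rw [← hE1] at hA1
        obtain ⟨P1, hP1, hP2⟩ := ih1 _ hA1
        obtain ⟨F, hF1, hF2⟩ := proj_steps hP2 hA2
        refine ⟨.app P1 M2, stepsV_appL M2 hP1, ?_⟩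
        rw [tradV_app_some M2 hF2]
        exact steps_appL _ hF1
      | appR M0 h2 =>
        obtain ⟨P2, hP1, hP2⟩ := ih2 _ h2
        refine ⟨.app M1 P2, stepsV_appR M1 hP1, ?_⟩
        rw [tradV_app_some P2 hd]
        exact steps_appR _ hP2
    | none =>
      rw [tradV_app_none M2 hd] at h
      cases h with
      | root hr =>
        obtain ⟨l, x, B, hder, rfl⟩ := root_app_inv hr
        rcases l.eq_nil_or_concat with rfl | ⟨L, ⟨y, B'⟩, rfl⟩
        · rw [lfill_nil] at hder; cases hder
        · simp only [List.concat_eq_append, lfill_concat] at hder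
          cases hder
      | appL N2 h1 =>
        cases h1 with
        | root hr2 =>
          obtain ⟨l, C, hC, rfl⟩ := root_der_inv hr2
          rw [hC, debang_lfill_bang] at hd
          cases hd
        | der h1' =>
          obtain ⟨P1, hP1, hP2⟩ := ih1 _ h1'
          cases he : debang (tradV P1) with
          | some F =>
            obtain ⟨lf, Cf, hf1, hf2⟩ := debang_eq_some he
            refine ⟨.app P1 M2, stepsV_appL M2 hP1, ?_⟩
            rw [tradV_app_some M2 he]
            refine Relation.ReflTransGen.tail
              (steps_appL _ (steps_der hP2)) ?_
            rw [hf1, hf2]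
            exact Step.appL _ (Step.root (Root.der lf Cf))
          | none =>
            refine ⟨.app P1 M2, stepsV_appL M2 hP1, ?_⟩
            rw [tradV_app_none M2 he]
            exact steps_appL _ (steps_der hP2)
      | appR M0 h2 =>
        obtain ⟨P2, hP1, hP2⟩ := ih2 _ h2
        refine ⟨.app M1 P2, stepsV_appR M1 hP1, ?_⟩
        rw [tradV_app_none P2 hd]
        exact steps_appR _ hP2
  | sub M1 x M2 ih1 ih2 =>
    rw [show tradV (NTerm.sub M1 x M2) = .sub (tradV M1) x (tradV M2) from rfl] at h
    cases h with
    | root hr =>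
      obtain ⟨l, B, hB, rfl⟩ := root_sub_inv hr
      obtain ⟨l', V, hV, hM2, hl, hVC⟩ := tradV_bang_ctx M2 l B hB
      obtain ⟨Q, hQ, hQn⟩ := tradV_value hV
      rw [hQ] at hVC
      injection hVC with hQB
      refine ⟨nlfill l' (nsubst V x M1), ?_, ?_⟩
      · refine Relation.ReflTransGen.single ?_
        rw [hM2]
        exact StepV.root (RootV.subst M1 x l' hV)
      · rw [tradV_nlfill, tradV_subst x hQ hQn M1, hQB, hl]
        exact Relation.ReflTransGen.refl
    | subL x0 N0 h1 =>
      obtain ⟨P1, hP1, hP2⟩ := ih1 _ h1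
      exact ⟨.sub P1 x M2, stepsV_subL x M2 hP1, steps_subL x _ hP2⟩
    | subR M0 x0 h2 =>
      obtain ⟨P2, hP1, hP2⟩ := ih2 _ h2
      exact ⟨.sub M1 x P2, stepsV_subR M1 x hP1, steps_subR _ x hP2⟩
  | bot =>
    simp only [tradV] at h
    cases h with
    | root hr => cases hr

end DBangPaper
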